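/- Fix l > 0 and set w(θ) = 1 + l² cos²θ. Define on ℝ² the functions g₁₁(t,θ) = e^{−2t} w(θ), g₂₂(t,θ) = e^{−2t}, A₁₁(t,θ) = e^{−t} l cosθ √w, A₁₂(t,θ) = e^{−t} l sinθ / √w, A₂₂(t,θ) = e^{−t} l cosθ / √w, H(t,θ) = 2 e^{t} l cosθ / √w, the traceless second fundamental form entries Å₁₁ = A₁₁ − (H/2) g₁₁, Å₁₂ = Å₂₁ = A₁₂, Å₂₂ = A₂₂ − (H/2) g₂₂, its squared norm |Å|² = Å₁₁²/(g₁₁ g₁₁) + 2 Å₁₂²/(g₁₁ g₂₂) + Å₂₂²/(g₂₂ g₂₂), and the Laplace–Beltrami operator Δ_g h = (1/√(g₁₁ g₂₂)) [ ∂_t( (√(g₁₁ g₂₂)/g₁₁) ∂_t h ) + ∂_θ( (√(g₁₁ g₂₂)/g₂₂) ∂_θ h ) ]. Then the Willmore equation Δ_g H + |Å|² H = 0 holds at every point (t,θ) ∈ ℝ². -/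

import Mathlib

open Real

noncomputable section

/-- `w(θ) = 1 + l² cos² θ`. -/
def wFun (l : ℝ) (θ : ℝ) : ℝ := 1 + l ^ 2 * Real.cos θ ^ 2

/-- `g₁₁ = e^{-2t} w(θ)`. -/
def g11 (l : ℝ) (p : ℝ × ℝ) : ℝ := Real.exp (-(2 * p.1)) * wFun l p.2

/-- `g₂₂ = e^{-2t}`. -/
def g22 (l : ℝ) (p : ℝ × ℝ) : ℝ := Real.exp (-(2 * p.1))

/-- `A₁₁ = e^{-t} l cos θ √w`. -/
def A11 (l : ℝ) (p : ℝ × ℝ) : ℝ :=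
  Real.exp (-p.1) * l * Real.cos p.2 * Real.sqrt (wFun l p.2)

/-- `A₁₂ = e^{-t} l sin θ / √w`. -/
def A12 (l : ℝ) (p : ℝ × ℝ) : ℝ :=
  Real.exp (-p.1) * l * Real.sin p.2 / Real.sqrt (wFun l p.2)

/-- `A₂₂ = e^{-t} l cos θ / √w`. -/
def A22 (l : ℝ) (p : ℝ × ℝ) : ℝ :=
  Real.exp (-p.1) * l * Real.cos p.2 / Real.sqrt (wFun l p.2)

/-- `H = 2 e^{t} l cos θ / √w`. -/
def meanH (l : ℝ) (p : ℝ × ℝ) : ℝ :=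
  2 * Real.exp p.1 * l * Real.cos p.2 / Real.sqrt (wFun l p.2)

/-- Traceless second fundamental form, `Å₁₁ = A₁₁ - (H/2) g₁₁`. -/
def tA11 (l : ℝ) (p : ℝ × ℝ) : ℝ := A11 l p - meanH l p / 2 * g11 l p

/-- `Å₁₂ = A₁₂`. -/
def tA12 (l : ℝ) (p : ℝ × ℝ) : ℝ := A12 l p

/-- `Å₂₂ = A₂₂ - (H/2) g₂₂`. -/
def tA22 (l : ℝ) (p : ℝ × ℝ) : ℝ := A22 l p - meanH l p / 2 * g22 l p

/-- `|Å|² = Å₁₁²/(g₁₁g₁₁) + 2Å₁₂²/(g₁₁g₂₂) + Å₂₂²/(g₂₂g₂₂)`. -/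
def tANormSq (l : ℝ) (p : ℝ × ℝ) : ℝ :=
  tA11 l p ^ 2 / (g11 l p * g11 l p) + 2 * tA12 l p ^ 2 / (g11 l p * g22 l p) +
    tA22 l p ^ 2 / (g22 l p * g22 l p)

/-- The Laplace–Beltrami operator of the metric `diag(g₁₁, g₂₂)`. -/
def lapBel (l : ℝ) (h : ℝ × ℝ → ℝ) (p : ℝ × ℝ) : ℝ :=
  (1 / Real.sqrt (g11 l p * g22 l p)) *
    (deriv (fun s =>
        (Real.sqrt (g11 l (s, p.2) * g22 l (s, p.2)) / g11 l (s, p.2)) *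
          deriv (fun s' => h (s', p.2)) s) p.1 +
     deriv (fun s =>
        (Real.sqrt (g11 l (p.1, s) * g22 l (p.1, s)) / g22 l (p.1, s)) *
          deriv (fun s' => h (p.1, s')) s) p.2)

/-- The explicit surface `f(t,θ) = (e^{-t}cos(lt)cos θ, e^{-t}sin θ, e^{-t}sin(lt)cos θ)`
is Willmore: `Δ_g H + |Å|² H = 0` (Section 6.1). -/
lemma wFun_pos (l θ : ℝ) : 0 < wFun l θ := by
  have : 0 ≤ l ^ 2 * Real.cos θ ^ 2 := by positivity
  unfold wFun; linarith

lemma sqrt_wFun_pos (l θ : ℝ) : 0 < Real.sqrt (wFun l θ) :=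
  Real.sqrt_pos.2 (wFun_pos l θ)

lemma sqrt_wFun_sq (l θ : ℝ) : Real.sqrt (wFun l θ) * Real.sqrt (wFun l θ) = wFun l θ :=
  Real.mul_self_sqrt (wFun_pos l θ).le

lemma sqrt_exp_mul (a w : ℝ) (hw : 0 ≤ w) :
    Real.sqrt (Real.exp a * w * Real.exp a) = Real.exp a * Real.sqrt w := by
  rw [show Real.exp a * w * Real.exp a = Real.exp a ^ 2 * w by ring,
    Real.sqrt_mul (sq_nonneg _), Real.sqrt_sq (Real.exp_pos a).le]

lemma hasDerivAt_wFun (l s : ℝ) :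
    HasDerivAt (fun x => wFun l x) (l ^ 2 * (2 * Real.cos s ^ 1 * (-Real.sin s))) s := by
  have h : HasDerivAt (fun x => Real.cos x ^ 2) (2 * Real.cos s ^ 1 * (-Real.sin s)) s :=
    (Real.hasDerivAt_cos s).pow 2
  simpa [wFun] using (h.const_mul (l ^ 2)).const_add 1

lemma hasDerivAt_meanH_theta (l t s : ℝ) :
    HasDerivAt (fun x => meanH l (t, x))
      (((2 * Real.exp t * l * (-Real.sin s)) * Real.sqrt (wFun l s) -
        2 * Real.exp t * l * Real.cos s *
          (l ^ 2 * (2 * Real.cos s ^ 1 * (-Real.sin s)) / (2 * Real.sqrt (wFun l s)))) /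
        Real.sqrt (wFun l s) ^ 2) s := by
  have hnum : HasDerivAt (fun x => 2 * Real.exp t * l * Real.cos x)
      (2 * Real.exp t * l * (-Real.sin s)) s := by
    simpa [mul_assoc] using (Real.hasDerivAt_cos s).const_mul (2 * Real.exp t * l)
  have hden : HasDerivAt (fun x => Real.sqrt (wFun l x))
      (l ^ 2 * (2 * Real.cos s ^ 1 * (-Real.sin s)) / (2 * Real.sqrt (wFun l s))) s :=
    (hasDerivAt_wFun l s).sqrt (wFun_pos l s).ne'
  exact hnum.div hden (sqrt_wFun_pos l s).ne'

lemma deriv_meanH_t (l θ t : ℝ) :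
    deriv (fun s' => meanH l (s', θ)) t =
      2 * Real.exp t * l * Real.cos θ / Real.sqrt (wFun l θ) := by
  have : HasDerivAt (fun s' => meanH l (s', θ))
      (2 * Real.exp t * l * Real.cos θ / Real.sqrt (wFun l θ)) t := by
    have h : HasDerivAt (fun s' : ℝ => 2 * Real.exp s' * l * Real.cos θ / Real.sqrt (wFun l θ))
        (2 * Real.exp t * l * Real.cos θ / Real.sqrt (wFun l θ)) t := by
      simpa [mul_comm, mul_assoc, mul_left_comm] using
        (((Real.hasDerivAt_exp t).const_mul 2).mul_const l).mul_const
          (Real.cos θ) |>.div_const (Real.sqrt (wFun l θ))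
    simpa [meanH] using h
  exact this.deriv

lemma inner_t_eq (l θ : ℝ) :
    (fun s => (Real.sqrt (g11 l (s, θ) * g22 l (s, θ)) / g11 l (s, θ)) *
        deriv (fun s' => meanH l (s', θ)) s) =
    fun s => 2 * Real.exp s * l * Real.cos θ / wFun l θ := by
  funext s
  rw [deriv_meanH_t]
  have hw := wFun_pos l θ
  have hsw := sqrt_wFun_sq l θ
  have hswne := (sqrt_wFun_pos l θ).ne'
  simp only [g11, g22, sqrt_exp_mul _ _ hw.le]
  rw [div_mul_div_comm, div_eq_div_iff (by positivity) hw.ne']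
  ring

lemma inner_theta_eq (l t : ℝ) :
    (fun s => (Real.sqrt (g11 l (t, s) * g22 l (t, s)) / g22 l (t, s)) *
        deriv (fun s' => meanH l (t, s')) s) =
    fun s => -(2 * Real.exp t * l) * Real.sin s / wFun l s := by
  funext s
  rw [(hasDerivAt_meanH_theta l t s).deriv]
  have hw := wFun_pos l s
  have hsw := sqrt_wFun_sq l s
  have hswne := (sqrt_wFun_pos l s).ne'
  simp only [g11, g22, sqrt_exp_mul _ _ hw.le]
  simp only [wFun] at hsw hswne hw ⊢
  field_simp
  linear_combination (-(l ^ 3 * Real.cos s ^ 2 * Real.sin s)) * hsw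
lemma deriv_outer_t (l θ t : ℝ) :
    deriv (fun s => 2 * Real.exp s * l * Real.cos θ / wFun l θ) t =
      2 * Real.exp t * l * Real.cos θ / wFun l θ :=
  (((((Real.hasDerivAt_exp t).const_mul 2).mul_const l).mul_const (Real.cos θ)).div_const
    (wFun l θ)).deriv

lemma deriv_outer_theta (l t θ : ℝ) :
    deriv (fun s => -(2 * Real.exp t * l) * Real.sin s / wFun l s) θ =
      ((-(2 * Real.exp t * l) * Real.cos θ) * wFun l θ -
        (-(2 * Real.exp t * l) * Real.sin θ) * (l ^ 2 * (2 * Real.cos θ ^ 1 * (-Real.sin θ)))) /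
        wFun l θ ^ 2 := by
  have hnum : HasDerivAt (fun x => -(2 * Real.exp t * l) * Real.sin x)
      (-(2 * Real.exp t * l) * Real.cos θ) θ := (Real.hasDerivAt_sin θ).const_mul _
  exact (hnum.div (hasDerivAt_wFun l θ) (wFun_pos l θ).ne').deriv

/-- main -/
theorem stmt19 (l : ℝ) (hl : 0 < l) :
    ∀ p : ℝ × ℝ, lapBel l (meanH l) p + tANormSq l p * meanH l p = 0 := by
  intro p
  obtain ⟨t, θ⟩ := p
  have hw := wFun_pos l θ
  have hsw := sqrt_wFun_sq l θ
  have hswne := (sqrt_wFun_pos l θ).ne'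
  simp only [lapBel]
  rw [inner_t_eq l θ, inner_theta_eq l t, deriv_outer_t, deriv_outer_theta]
  simp only [tANormSq, tA11, tA12, tA22, A11, A12, A22, meanH, g11, g22,
    sqrt_exp_mul _ _ hw.le]
  set sw := Real.sqrt (wFun l θ) with hdef
  rw [← hsw]
  have he2 : Real.exp (-(2 * t)) = (Real.exp t)⁻¹ * (Real.exp t)⁻¹ := by
    rw [← Real.exp_neg, ← Real.exp_add]; congr 1; ring
  simp only [he2, Real.exp_neg]
  field_simp
  ring


end
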